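/- For every real number u ≥ 0, one has h(u) = (1+u)·ln(1+u) − u ≥ (1/2)·u·ln u (with the convention that 0·ln 0 = 0 at u = 0). -/

import Mathlib

open Real Set

lemma aux_log_lb {u : ℝ} (hu : 0 ≤ u) : u ≤ (1 + u) * Real.log (1 + u) := by
  have h1 : (0:ℝ) < 1 + u := by linarith
  have h2 : Real.log (1 / (1 + u)) ≤ 1 / (1 + u) - 1 :=
    Real.log_le_sub_one_of_pos (by positivity)
  rw [Real.log_div one_ne_zero (ne_of_gt h1), Real.log_one] at h2
  have h3 : u / (1 + u) ≤ Real.log (1 + u) := by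
    have : 1 - 1 / (1 + u) ≤ Real.log (1 + u) := by linarith
    calc u / (1 + u) = 1 - 1 / (1 + u) := by field_simp; ring
    _ ≤ _ := this
  calc u = (1 + u) * (u / (1 + u)) := by field_simp
  _ ≤ (1 + u) * Real.log (1 + u) := by
      exact mul_le_mul_of_nonneg_left h3 (le_of_lt h1)

lemma aux_deriv {x : ℝ} (hx : 0 < x) :
    HasDerivAt (fun u : ℝ => (1 + u) * Real.log (1 + u) - u - 1 / 2 * u * Real.log u)
      (Real.log (1 + x) - 1 / 2 * Real.log x - 1 / 2) x := by
  have h1 : (0:ℝ) < 1 + x := by linarith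
  have d1 : HasDerivAt (fun u : ℝ => 1 + u) 1 x := by
    simpa using (hasDerivAt_id x).const_add 1
  have d2 : HasDerivAt (fun u : ℝ => Real.log (1 + u)) (1 / (1 + x)) x := by
    have := (Real.hasDerivAt_log (ne_of_gt h1)).comp x d1
    simpa [Function.comp_def] using this
  have d3 : HasDerivAt (fun u : ℝ => (1 + u) * Real.log (1 + u))
      (1 * Real.log (1 + x) + (1 + x) * (1 / (1 + x))) x := d1.mul d2
  have d4 : HasDerivAt (fun u : ℝ => u * Real.log u)
      (1 * Real.log x + x * x⁻¹) x := (hasDerivAt_id x).mul (Real.hasDerivAt_log (ne_of_gt hx))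
  have d5 : HasDerivAt (fun u : ℝ => 1 / 2 * u * Real.log u)
      (1 / 2 * (1 * Real.log x + x * x⁻¹)) x := by
    have := d4.const_mul (1 / 2)
    simpa [mul_assoc] using this
  have := (d3.sub (hasDerivAt_id x)).sub d5
  exact this.congr_deriv (by rw [mul_one_div_cancel h1.ne', mul_inv_cancel₀ hx.ne']; ring)

lemma aux_mono : MonotoneOn
    (fun u : ℝ => (1 + u) * Real.log (1 + u) - u - 1 / 2 * u * Real.log u) (Set.Ici 1) := by
  apply monotoneOn_of_deriv_nonneg (convex_Ici 1)
  · apply ContinuousOn.sub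
    apply ContinuousOn.sub
    · exact (continuousOn_const.add continuousOn_id).mul
        ((Real.continuousOn_log.comp (continuousOn_const.add continuousOn_id)
          (fun x hx => by simp only [Set.mem_Ici] at hx; simp; intro h; linarith)))
    · exact continuousOn_id
    · exact (continuousOn_const.mul continuousOn_id).mul
        (Real.continuousOn_log.mono (fun x hx => by
          simp only [Set.mem_Ici] at hx; simp; linarith))
  · intro x hx
    rw [interior_Ici] at hx
    exact ((aux_deriv (by linarith [Set.mem_Ioi.mp hx] : (0:ℝ) < x)).differentiableAt).differentiableWithinAt
  · intro x hx
    rw [interior_Ici] at hx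
    have hx1 : (1:ℝ) < x := hx
    have hx0 : (0:ℝ) < x := by linarith
    rw [(aux_deriv hx0).deriv]
    -- need: log(1+x) - 1/2 log x - 1/2 ≥ 0, i.e. 2 log(1+x) ≥ log x + 1
    have key : Real.log x + 1 ≤ 2 * Real.log (1 + x) := by
      have h4 : x * Real.exp 1 ≤ x * 4 := by
        have := Real.exp_one_lt_d9
        nlinarith
      have h5 : x * 4 ≤ (1 + x) ^ 2 := by nlinarith
      have h6 : Real.log (x * Real.exp 1) ≤ Real.log ((1 + x) ^ 2) :=
        Real.log_le_log (by positivity) (le_trans h4 h5)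
      rw [Real.log_mul (ne_of_gt hx0) (Real.exp_ne_zero 1), Real.log_exp,
        Real.log_pow] at h6
      push_cast at h6
      linarith
    linarith

/-- For every real `u ≥ 0`, one has
`h u = (1+u) * ln (1+u) - u ≥ (1/2) * u * ln u`
(with the convention `0 * ln 0 = 0` at `u = 0`; note `Real.log 0 = 0` in Mathlib). -/
theorem stmt_4 (u : ℝ) (hu : 0 ≤ u) :
    (1 / 2) * u * Real.log u ≤ (1 + u) * Real.log (1 + u) - u := by
  rcases le_or_gt u 1 with h | h
  · have hlog : Real.log u ≤ 0 := Real.log_nonpos hu h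
    have hL : (1 / 2) * u * Real.log u ≤ 0 := by
      apply mul_nonpos_of_nonneg_of_nonpos
      · positivity
      · exact hlog
    have hR : 0 ≤ (1 + u) * Real.log (1 + u) - u := by
      have := aux_log_lb hu
      linarith
    linarith
  · have h1 : (1:ℝ) ∈ Set.Ici (1:ℝ) := Set.mem_Ici.mpr le_rfl
    have hu1 : u ∈ Set.Ici (1:ℝ) := Set.mem_Ici.mpr h.le
    have := aux_mono h1 hu1 h.le
    simp only [Real.log_one] at this
    have hlog2 : (0.6931471803 : ℝ) < Real.log 2 := Real.log_two_gt_d9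
    have : (1 + 1) * Real.log (1 + 1) - 1 - 1 / 2 * 1 * Real.log 1 ≤
        (1 + u) * Real.log (1 + u) - u - 1 / 2 * u * Real.log u := aux_mono h1 hu1 h.le
    rw [Real.log_one] at this
    norm_num at this
    have h2 : (1:ℝ) + 1 = 2 := by norm_num
    nlinarith [this]
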